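/- On ℝ^3 with coordinates (x, y, z), let g be the metric dx⊗dx + 2*e^{-x}*(dy⊗dz + dz⊗dy). Then each of the six vector fields ∂_y, ∂_z, 2*∂_x + y*∂_y + z*∂_z, y*∂_y - z*∂_z, 2*y*∂_x + y^2*∂_y - e^x*∂_z, 2*z*∂_x - e^x*∂_y + z^2*∂_z is a Killing vector field of g, i.e., satisfies L_X(g) = 0. -/

import Mathlib

namespace Stmt9

/-- Points of `ℝ³` with coordinates `(x, y, z)`. -/
abbrev Pt := Fin 3 → ℝ

/-- The constant-curvature metric `g = dx⊗dx + 2 e^{−x} (dy⊗dz + dz⊗dy)`. -/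
noncomputable def g : Pt → Fin 3 → Fin 3 → ℝ := fun q =>
  !![1, 0, 0; 0, 0, 2 * Real.exp (-(q 0)); 0, 2 * Real.exp (-(q 0)), 0]

/-- The `(i,j)` component of the Lie derivative of the symmetric (0,2)-tensor
with components `h` along the vector field `V`:
`(L_V h)_{ij} = V(h_{ij}) + Σ_k h_{kj} ∂_i V^k + Σ_k h_{ik} ∂_j V^k`. -/
noncomputable def lieDerivMetric (V : Pt → Pt) (h : Pt → Fin 3 → Fin 3 → ℝ)
    (q : Pt) (i j : Fin 3) : ℝ :=
  fderiv ℝ (fun r => h r i j) q (V q)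
    + ∑ k, h q k j * fderiv ℝ (fun r => V r k) q (Pi.single i 1)
    + ∑ k, h q i k * fderiv ℝ (fun r => V r k) q (Pi.single j 1)

noncomputable def projCLM (k : Fin 3) : Pt →L[ℝ] ℝ := ContinuousLinearMap.proj k

lemma hproj (k : Fin 3) (q : Pt) :
    HasFDerivAt (fun r : Pt => r k) (projCLM k) q :=
  (projCLM k).hasFDerivAt

@[simp] lemma projCLM_apply (k : Fin 3) (v : Pt) : projCLM k v = v k := rfl

@[simp] lemma fd_proj (k : Fin 3) (q : Pt) (v : Pt) :
    fderiv ℝ (fun r : Pt => r k) q v = v k := by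
  rw [(hproj k q).fderiv]; rfl

@[simp] lemma fd_neg2 (q v : Pt) :
    fderiv ℝ (fun r : Pt => -(r 2)) q v = -(v 2) := by
  rw [HasFDerivAt.fderiv (f := fun r : Pt => -(r 2)) ((hproj 2 q).neg)]; simp

@[simp] lemma fd_two_mul (k : Fin 3) (q v : Pt) :
    fderiv ℝ (fun r : Pt => 2 * r k) q v = 2 * v k := by
  rw [((hproj k q).const_mul 2).fderiv]; simp

@[simp] lemma fd_sq (k : Fin 3) (q v : Pt) :
    fderiv ℝ (fun r : Pt => (r k) ^ 2) q v = 2 * q k * v k := by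
  have e : (fun r : Pt => (r k) ^ 2) = fun r : Pt => r k * r k := by
    funext r; ring
  rw [e, HasFDerivAt.fderiv (f := fun r : Pt => r k * r k) ((hproj k q).mul (hproj k q))]; simp; ring

@[simp] lemma fd_exp (q v : Pt) :
    fderiv ℝ (fun r : Pt => Real.exp (r 0)) q v = Real.exp (q 0) * v 0 := by
  rw [((hproj 0 q).exp).fderiv]; simp

@[simp] lemma fd_negexp (q v : Pt) :
    fderiv ℝ (fun r : Pt => -Real.exp (r 0)) q v = -(Real.exp (q 0) * v 0) := by
  rw [HasFDerivAt.fderiv (f := fun r : Pt => -Real.exp (r 0)) ((hproj 0 q).exp.neg)]; simp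

@[simp] lemma fd_metric (q v : Pt) :
    fderiv ℝ (fun r : Pt => 2 * Real.exp (-(r 0))) q v
      = -(2 * Real.exp (-(q 0)) * v 0) := by
  rw [HasFDerivAt.fderiv (f := fun r : Pt => 2 * Real.exp (-(r 0))) (((hproj 0 q).neg.exp).const_mul 2)]; simp; ring

set_option maxHeartbeats 2000000 in
/-- Each of the six vector fields
`∂_y, ∂_z, 2∂_x + y∂_y + z∂_z, y∂_y − z∂_z, 2y∂_x + y²∂_y − eˣ∂_z, 2z∂_x − eˣ∂_y + z²∂_z`
is a Killing field of `g = dx² + 4 e^{−x} dy dz` (the so(4) realization). -/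
theorem so4_killing :
    ∀ V ∈ ({(fun _ => ![0, 1, 0]),
            (fun _ => ![0, 0, 1]),
            (fun q => ![2, q 1, q 2]),
            (fun q => ![0, q 1, -(q 2)]),
            (fun q => ![2 * q 1, (q 1) ^ 2, -Real.exp (q 0)]),
            (fun q => ![2 * q 2, -Real.exp (q 0), (q 2) ^ 2])} : Set (Pt → Pt)),
      ∀ (q : Pt) (i j : Fin 3), lieDerivMetric V g q i j = 0 := by
  intro V hV q i j
  simp only [Set.mem_insert_iff, Set.mem_singleton_iff] at hV
  rcases hV with h|h|h|h|h|h <;> subst h <;> fin_cases i <;> fin_cases j <;>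
    simp [lieDerivMetric, g, Fin.sum_univ_three, Pi.single_apply,
      Matrix.cons_val_zero, Matrix.cons_val_one, Matrix.head_cons,
      Matrix.vecHead, Matrix.vecTail] <;> (try ring1) <;>
    (field_simp [Real.exp_neg]) <;> simp [← Real.exp_add]

end Stmt9
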